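/- In the Hahn series field F = HahnSeries ℝ ℝ, the tempered powers compose: for every a ∈ F⁺ = {x : x ≠ 0, 0 < leadingCoeff x} and all γ, γ' ∈ ℝ, the element tp a γ again lies in F⁺ and tp (tp a γ) γ' = tp a (γ·γ'). -/

import Mathlib

open HahnSeries

/-- The exponential summable family `n ↦ (n!)⁻¹ • bⁿ` of an element `b` of positive
order in the Hahn series field. -/
noncomputable def expFamily (b : HahnSeries ℝ ℝ) (hb : 0 < b.orderTop) :
    SummableFamily ℝ ℝ ℕ where
  toFun n := ((n.factorial : ℝ))⁻¹ • b ^ n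
  isPWO_iUnion_support' := by
    refine (SummableFamily.powers b).isPWO_iUnion_support.mono ?_
    intro g hg
    obtain ⟨n, hn⟩ := Set.mem_iUnion.mp hg
    refine Set.mem_iUnion.mpr ⟨n, ?_⟩
    have hn' : (((n.factorial : ℝ))⁻¹ • b ^ n).coeff g ≠ 0 := hn
    have hbn : (b ^ n).coeff g ≠ 0 := fun h => hn' (by rw [HahnSeries.coeff_smul, h, smul_zero])
    show ((if 0 < b.orderTop then b else 0) ^ n).coeff g ≠ 0
    rw [if_pos hb]
    exact hbn
  finite_co_support' g := by
    refine ((SummableFamily.powers b).finite_co_support g).subset ?_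
    intro n hn
    simp only [Set.mem_setOf_eq] at hn ⊢
    intro h
    apply hn
    rw [HahnSeries.coeff_smul]
    have h' : (b ^ n).coeff g = 0 := by
      have h2 : ((if 0 < b.orderTop then b else 0) ^ n).coeff g = 0 := h
      rwa [if_pos hb] at h2
    rw [h', smul_zero]

/-- The restricted exponential on the maximal ideal of the valuation ring:
`E b = ∑_{n} (n!)⁻¹ bⁿ` when `0 < orderTop b`, and (junk value) `0` otherwise. -/
noncomputable def E (b : HahnSeries ℝ ℝ) : HahnSeries ℝ ℝ :=
  if hb : 0 < b.orderTop then (expFamily b hb).hsum else 0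

/-- The exponential on the valuation ring `O = {x : 0 ≤ orderTop x}`, combining the
real exponential on the constant term with the restricted exponential `E`. -/
noncomputable def expO (a : HahnSeries ℝ ℝ) : HahnSeries ℝ ℝ :=
  HahnSeries.single (0 : ℝ) (Real.exp (a.coeff 0)) *
    E (a - HahnSeries.single (0 : ℝ) (a.coeff 0))

/-- The logarithm on positive units: the inverse of the bijection `expO : O → U⁺`. -/
noncomputable def logO (x : HahnSeries ℝ ℝ) : HahnSeries ℝ ℝ :=
  Function.invFunOn expO {a : HahnSeries ℝ ℝ | 0 ≤ a.orderTop} x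

/-- The power `b ^ c = expO (c · logO b)` for `b ∈ U⁺` and `c ∈ O`. -/
noncomputable def hpow (b c : HahnSeries ℝ ℝ) : HahnSeries ℝ ℝ :=
  expO (c * logO b)

/-- Membership in the group `U⁺` of positive units of the valuation ring. -/
def memUplus (x : HahnSeries ℝ ℝ) : Prop :=
  x ≠ 0 ∧ x.order = 0 ∧ 0 < x.leadingCoeff

/-- The signed valuation on the Hahn series field `HahnSeries ℝ ℝ`. -/
noncomputable def vv (x : HahnSeries ℝ ℝ) : ℝ :=
  Real.sign x.leadingCoeff * Real.exp (-x.order)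

/-- The diagonal cross-section `π : ℝ^× → HahnSeries ℝ ℝ`. -/
noncomputable def diagPi (a : ℝ) : HahnSeries ℝ ℝ :=
  HahnSeries.single (-Real.log |a|) a

/-- The tempered power `a^γ = π((vv a)^γ) · (a / π(vv a))^{single 0 γ}`, for `a ∈ F⁺`
and `γ ∈ ℝ`, where `(vv a)^γ` is the real power `Real.rpow`. -/
noncomputable def tp (a : HahnSeries ℝ ℝ) (γ : ℝ) : HahnSeries ℝ ℝ :=
  diagPi ((vv a) ^ γ) * hpow (a / diagPi (vv a)) (HahnSeries.single (0 : ℝ) γ)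


namespace TP13

open Finset PowerSeries

theorem orderTop_pos_iff {x : HahnSeries ℝ ℝ} :
    0 < x.orderTop ↔ ∀ g : ℝ, g ≤ 0 → x.coeff g = 0 := by
  constructor
  · intro h g hg
    refine coeff_eq_zero_of_lt_orderTop (lt_of_le_of_lt ?_ h)
    exact_mod_cast hg
  · intro h
    rcases eq_or_ne x 0 with rfl | hx
    · simp
    · have hc : x.coeff x.order ≠ 0 := by
        have := coeff_orderTop_ne (g := x.order) (by rw [orderTop_of_ne_zero hx, order_of_ne hx])
        exact this
      have hord : 0 < x.order := by
        by_contra hle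
        exact hc (h _ (le_of_not_gt hle))
      exact zero_lt_orderTop_of_order hord

theorem orderTop_nonneg_iff {x : HahnSeries ℝ ℝ} :
    0 ≤ x.orderTop ↔ ∀ g : ℝ, g < 0 → x.coeff g = 0 := by
  constructor
  · intro h g hg
    refine coeff_eq_zero_of_lt_orderTop (lt_of_lt_of_le ?_ h)
    exact_mod_cast hg
  · intro h
    rcases eq_or_ne x 0 with rfl | hx
    · simp
    · have hc : x.coeff x.order ≠ 0 := by
        have := coeff_orderTop_ne (g := x.order) (by rw [orderTop_of_ne_zero hx, order_of_ne hx])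
        exact this
      have hord : 0 ≤ x.order := by
        by_contra hle
        exact hc (h _ (lt_of_not_ge hle))
      exact zero_le_orderTop_iff.mpr hord

theorem orderTop_pos_mul {x y : HahnSeries ℝ ℝ} (hx : 0 < x.orderTop)
    (hy : 0 ≤ y.orderTop) : 0 < (x * y).orderTop :=
  lt_of_lt_of_le (add_pos_of_pos_of_nonneg hx hy) orderTop_add_le_mul

theorem orderTop_nonneg_mul {x y : HahnSeries ℝ ℝ} (hx : 0 ≤ x.orderTop)
    (hy : 0 ≤ y.orderTop) : 0 ≤ (x * y).orderTop :=
  le_trans (add_nonneg hx hy) orderTop_add_le_mul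

theorem orderTop_pos_pow {x : HahnSeries ℝ ℝ} (hx : 0 < x.orderTop) {n : ℕ} (hn : n ≠ 0) :
    0 < (x ^ n).orderTop := by
  induction n with
  | zero => exact absurd rfl hn
  | succ n ih =>
    rcases Nat.eq_zero_or_pos n with rfl | hn'
    · simpa using hx
    · rw [pow_succ]
      exact orderTop_pos_mul (ih hn'.ne') hx.le

theorem orderTop_pos_smul {x : HahnSeries ℝ ℝ} (c : ℝ) (hx : 0 < x.orderTop) :
    0 < (c • x).orderTop := by
  rw [orderTop_pos_iff] at hx ⊢
  intro g hg
  rw [HahnSeries.coeff_smul, hx g hg, smul_zero]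

theorem orderTop_pos_sum {ι : Type*} {s : Finset ι} {f : ι → HahnSeries ℝ ℝ}
    (h : ∀ i ∈ s, 0 < (f i).orderTop) : 0 < (∑ i ∈ s, f i).orderTop := by
  rw [orderTop_pos_iff]
  intro g hg
  have : (∑ i ∈ s, f i).coeff g = ∑ i ∈ s, (f i).coeff g :=
    map_sum (HahnSeries.coeff.addMonoidHom g) f s
  rw [this]
  exact Finset.sum_eq_zero fun i hi => orderTop_pos_iff.mp (h i hi) g hg

theorem orderTop_pos_hsum {α : Type*} (s : SummableFamily ℝ ℝ α)
    (h : ∀ a, 0 < (s a).orderTop) : 0 < s.hsum.orderTop := by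
  rw [orderTop_pos_iff]
  intro g hg
  rw [SummableFamily.coeff_hsum]
  exact finsum_eq_zero_of_forall_eq_zero fun i => orderTop_pos_iff.mp (h i) g hg


theorem smul_mul_smul' (r s : ℝ) (x y : HahnSeries ℝ ℝ) :
    (r • x) * (s • y) = (r * s) • (x * y) := by
  rw [← single_zero_mul_eq_smul, ← single_zero_mul_eq_smul, ← single_zero_mul_eq_smul,
    mul_mul_mul_comm, single_mul_single, add_zero]

/-- generic coefficient family -/
noncomputable def powFamily (c : ℕ → ℝ) (x : HahnSeries ℝ ℝ) (hx : 0 < x.orderTop) :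
    SummableFamily ℝ ℝ ℕ where
  toFun n := c n • x ^ n
  isPWO_iUnion_support' := by
    refine (SummableFamily.powers x).isPWO_iUnion_support.mono ?_
    intro g hg
    obtain ⟨n, hn⟩ := Set.mem_iUnion.mp hg
    refine Set.mem_iUnion.mpr ⟨n, ?_⟩
    have hn' : ((c n) • x ^ n).coeff g ≠ 0 := hn
    have hbn : (x ^ n).coeff g ≠ 0 := fun h => hn' (by rw [HahnSeries.coeff_smul, h, smul_zero])
    simpa [hx] using hbn
  finite_co_support' g := by
    refine ((SummableFamily.powers x).finite_co_support g).subset ?_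
    intro n hn
    simp only [Set.mem_setOf_eq] at hn ⊢
    intro h
    apply hn
    rw [HahnSeries.coeff_smul]
    have h' : (x ^ n).coeff g = 0 := by
      simpa [hx] using h
    rw [h', smul_zero]

@[simp] theorem powFamily_apply (c : ℕ → ℝ) (x : HahnSeries ℝ ℝ) (hx : 0 < x.orderTop) (n : ℕ) :
    powFamily c x hx n = c n • x ^ n := rfl

theorem pow_cosupp_finite (x : HahnSeries ℝ ℝ) (hx : 0 < x.orderTop) (γ : ℝ) :
    {n : ℕ | (x ^ n).coeff γ ≠ 0}.Finite := by
  refine ((SummableFamily.powers x).finite_co_support γ).subset ?_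
  intro n hn
  simp only [Set.mem_setOf_eq] at hn ⊢
  simpa [hx] using hn

/-- evaluation of a power series at `x` of positive order -/
noncomputable def phe (f : PowerSeries ℝ) (x : HahnSeries ℝ ℝ) (hx : 0 < x.orderTop) :
    HahnSeries ℝ ℝ :=
  (powFamily (fun n => PowerSeries.coeff n f) x hx).hsum

theorem phe_coeff (f : PowerSeries ℝ) (x : HahnSeries ℝ ℝ) (hx : 0 < x.orderTop) (γ : ℝ) :
    (phe f x hx).coeff γ = ∑ᶠ n : ℕ, (PowerSeries.coeff n f) * (x ^ n).coeff γ := by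
  rw [phe, SummableFamily.coeff_hsum]
  exact finsum_congr fun n => by rw [powFamily_apply, HahnSeries.coeff_smul, smul_eq_mul]

theorem phe_coeff_eq_sum (f : PowerSeries ℝ) (x : HahnSeries ℝ ℝ) (hx : 0 < x.orderTop) (γ : ℝ)
    {s : Finset ℕ} (hs : {n : ℕ | (x ^ n).coeff γ ≠ 0} ⊆ ↑s) :
    (phe f x hx).coeff γ = ∑ n ∈ s, (PowerSeries.coeff n f) * (x ^ n).coeff γ := by
  rw [phe_coeff]
  refine finsum_eq_sum_of_support_subset _ ?_
  intro n hn
  rw [Function.mem_support] at hn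
  have hxn : (x ^ n).coeff γ ≠ 0 := fun h => hn (by rw [h, mul_zero])
  exact hs hxn

theorem phe_one (x : HahnSeries ℝ ℝ) (hx : 0 < x.orderTop) : phe 1 x hx = 1 := by
  ext γ
  rw [phe_coeff]
  rw [finsum_eq_single _ 0 (fun n hn => by
    simp [PowerSeries.coeff_one, hn])]
  simp

theorem phe_X (x : HahnSeries ℝ ℝ) (hx : 0 < x.orderTop) : phe PowerSeries.X x hx = x := by
  ext γ
  rw [phe_coeff]
  rw [finsum_eq_single _ 1 (fun n hn => by
    simp [PowerSeries.coeff_X, hn])]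
  simp

theorem phe_add (f g : PowerSeries ℝ) (x : HahnSeries ℝ ℝ) (hx : 0 < x.orderTop) :
    phe (f + g) x hx = phe f x hx + phe g x hx := by
  have h : powFamily (fun n => PowerSeries.coeff n (f + g)) x hx =
      powFamily (fun n => PowerSeries.coeff n f) x hx +
      powFamily (fun n => PowerSeries.coeff n g) x hx := by
    refine SummableFamily.ext fun n => ?_
    rw [SummableFamily.add_apply, powFamily_apply, powFamily_apply, powFamily_apply]
    ext g
    simp [HahnSeries.coeff_smul, map_add, add_mul]
  rw [phe, h, SummableFamily.hsum_add]
  rfl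

theorem phe_mul (f g : PowerSeries ℝ) (x : HahnSeries ℝ ℝ) (hx : 0 < x.orderTop) :
    phe (f * g) x hx = phe f x hx * phe g x hx := by
  classical
  set s := powFamily (fun n => PowerSeries.coeff n f) x hx with hsdef
  set t := powFamily (fun n => PowerSeries.coeff n g) x hx with htdef
  have hR : phe f x hx * phe g x hx = (SummableFamily.smul s t).hsum := by
    rw [SummableFamily.smul_hsum, HahnSeries.of_symm_smul_of_eq_mul]
    rfl
  ext γ
  rw [hR]
  -- finite support data
  set Mfin : Finset ℕ := (pow_cosupp_finite x hx γ).toFinset with hM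
  set N : ℕ := Mfin.sup id with hN
  have hMsub : {n : ℕ | (x ^ n).coeff γ ≠ 0} ⊆ ↑(Finset.range (N + 1)) := by
    intro n hn
    have : n ∈ Mfin := (Set.Finite.mem_toFinset _).mpr hn
    simpa using Nat.lt_succ_of_le (Finset.le_sup (f := id) this)
  have hmemM : ∀ {n : ℕ}, (x ^ n).coeff γ ≠ 0 → n ≤ N := by
    intro n hn
    exact Finset.le_sup (f := id) ((Set.Finite.mem_toFinset _).mpr hn)
  -- LHS
  rw [phe_coeff_eq_sum _ x hx γ hMsub]
  -- RHS
  have hfam : ∀ p : ℕ × ℕ, (SummableFamily.smul s t) p =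
      ((PowerSeries.coeff p.1 f) * (PowerSeries.coeff p.2 g)) • x ^ (p.1 + p.2) := by
    intro p
    show (HahnModule.of ℝ).symm (s p.1 • (HahnModule.of ℝ) (t p.2)) = _
    rw [HahnSeries.of_symm_smul_of_eq_mul]
    rw [hsdef, htdef, powFamily_apply, powFamily_apply, smul_mul_smul' , _root_.pow_add]
  rw [SummableFamily.coeff_hsum]
  have hsupp : (Function.support fun p : ℕ × ℕ =>
      ((SummableFamily.smul s t) p).coeff γ) ⊆
      ↑(Finset.range (N + 1) ×ˢ Finset.range (N + 1)) := by
    intro p hp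
    rw [Function.mem_support, hfam p, HahnSeries.coeff_smul] at hp
    have hxp : (x ^ (p.1 + p.2)).coeff γ ≠ 0 := fun h => hp (by rw [h, smul_zero])
    have := hmemM hxp
    simp only [Finset.coe_product, Set.mem_prod, Finset.mem_coe, Finset.mem_range]
    exact ⟨Nat.lt_succ_of_le (le_trans (Nat.le_add_right _ _) this),
      Nat.lt_succ_of_le (le_trans (Nat.le_add_left _ _) this)⟩
  rw [finsum_eq_sum_of_support_subset _ hsupp]
  -- now a pure Finset identity
  have hterm : ∀ p : ℕ × ℕ, ((SummableFamily.smul s t) p).coeff γ =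
      (PowerSeries.coeff p.1 f) * (PowerSeries.coeff p.2 g) * (x ^ (p.1 + p.2)).coeff γ := by
    intro p
    rw [hfam p, HahnSeries.coeff_smul, smul_eq_mul]
  simp_rw [hterm]
  -- LHS: expand coeff_mul and reindex
  have hL : ∑ n ∈ Finset.range (N + 1), (PowerSeries.coeff n (f * g)) * (x ^ n).coeff γ =
      ∑ n ∈ Finset.range (N + 1), ∑ p ∈ Finset.HasAntidiagonal.antidiagonal n,
        (PowerSeries.coeff p.1 f) * (PowerSeries.coeff p.2 g) * (x ^ (p.1 + p.2)).coeff γ := by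
    refine Finset.sum_congr rfl fun n _ => ?_
    rw [PowerSeries.coeff_mul, Finset.sum_mul]
    refine Finset.sum_congr rfl fun p hp => ?_
    rw [Finset.HasAntidiagonal.mem_antidiagonal.mp hp]
  rw [hL]
  rw [← Finset.sum_biUnion (by
    intro i _ j _ hij
    simp only [Finset.disjoint_left]
    intro p hpi hpj
    exact hij ((Finset.HasAntidiagonal.mem_antidiagonal.mp hpi).symm.trans (Finset.HasAntidiagonal.mem_antidiagonal.mp hpj)))]
  refine Finset.sum_subset ?_ ?_
  · intro p hp
    obtain ⟨n, hn, hpn⟩ := Finset.mem_biUnion.mp hp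
    have := Finset.HasAntidiagonal.mem_antidiagonal.mp hpn
    simp only [Finset.mem_product, Finset.mem_range] at *
    omega
  · intro p _ hp
    by_contra hne
    have hxp : (x ^ (p.1 + p.2)).coeff γ ≠ 0 := by
      intro h
      exact hne (by rw [h, mul_zero])
    have hle := hmemM hxp
    refine hp (Finset.mem_biUnion.mpr ⟨p.1 + p.2, ?_, Finset.HasAntidiagonal.mem_antidiagonal.mpr rfl⟩)
    exact Finset.mem_range.mpr (Nat.lt_succ_of_le hle)

theorem phe_pow (f : PowerSeries ℝ) (x : HahnSeries ℝ ℝ) (hx : 0 < x.orderTop) (n : ℕ) :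
    phe (f ^ n) x hx = (phe f x hx) ^ n := by
  induction n with
  | zero => simpa using phe_one x hx
  | succ n ih => rw [pow_succ, pow_succ, phe_mul, ih]


noncomputable def Lps : PowerSeries ℝ :=
  PowerSeries.mk fun n => if n = 0 then 0 else (-1) ^ (n + 1) / n

theorem constantCoeff_Lps : PowerSeries.constantCoeff Lps = 0 := by
  rw [← PowerSeries.coeff_zero_eq_constantCoeff, Lps, PowerSeries.coeff_mk]
  simp

theorem coeff_Lps_pow_eq_zero {m n : ℕ} (h : m < n) :
    PowerSeries.coeff m (Lps ^ n) = 0 := by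
  have hdvd : (PowerSeries.X : PowerSeries ℝ) ^ n ∣ Lps ^ n :=
    pow_dvd_pow_of_dvd (PowerSeries.X_dvd_iff.mpr constantCoeff_Lps) n
  exact PowerSeries.X_pow_dvd_iff.mp hdvd m h

noncomputable def Gcoeff (m : ℕ) : ℝ :=
  ∑ n ∈ Finset.range (m + 1), ((n.factorial : ℝ))⁻¹ * PowerSeries.coeff m (Lps ^ n)

noncomputable def Gps : PowerSeries ℝ := PowerSeries.mk Gcoeff

theorem Gps_coeff (m : ℕ) : PowerSeries.coeff m Gps = Gcoeff m := PowerSeries.coeff_mk m _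

/-- `(1+X) * L' = 1`. -/
theorem one_add_X_mul_dLps : (1 + PowerSeries.X) * (d⁄dX ℝ Lps) = 1 := by
  ext m
  have hd : ∀ k : ℕ, PowerSeries.coeff k (d⁄dX ℝ Lps) = (-1) ^ k := by
    intro k
    rw [PowerSeries.coeff_derivative, Lps, PowerSeries.coeff_mk]
    simp only [Nat.succ_ne_zero, if_false]
    rw [pow_succ, pow_succ]
    field_simp
    norm_num
  rw [add_mul, one_mul, map_add]
  cases m with
  | zero => simp [hd 0]
  | succ m =>
    rw [PowerSeries.coeff_succ_X_mul, hd (m + 1), hd m]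
    simp [pow_succ]

/-- `G' = G * L'`. -/
theorem dGps_eq : d⁄dX ℝ Gps = Gps * d⁄dX ℝ Lps := by
  ext m
  rw [PowerSeries.coeff_derivative, Gps_coeff]
  -- LHS = ∑_{n ∈ range (m+1)} (n!)⁻¹ * coeff m (Lps^n * dL)
  have hL : Gcoeff (m + 1) * ((m : ℝ) + 1) =
      ∑ n ∈ Finset.range (m + 1),
        ((n.factorial : ℝ))⁻¹ * PowerSeries.coeff m (Lps ^ n * d⁄dX ℝ Lps) := by
    rw [Gcoeff, Finset.sum_mul, Finset.sum_range_succ']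
    have h0 : ((Nat.factorial 0 : ℝ))⁻¹ * PowerSeries.coeff (m + 1) (Lps ^ 0) * ((m : ℝ) + 1)
        = 0 := by
      simp [PowerSeries.coeff_one]
    rw [h0, add_zero]
    refine Finset.sum_congr rfl fun n _ => ?_
    have hder : PowerSeries.coeff (m + 1) (Lps ^ (n + 1)) * ((m : ℝ) + 1) =
        PowerSeries.coeff m (d⁄dX ℝ (Lps ^ (n + 1))) := by
      rw [PowerSeries.coeff_derivative]
    have hpow : d⁄dX ℝ (Lps ^ (n + 1)) = (n + 1 : ℕ) • (Lps ^ n * d⁄dX ℝ Lps) := by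
      have := Derivation.leibniz_pow (d⁄dX ℝ) (a := Lps) (n + 1)
      simpa [smul_eq_mul, Nat.add_sub_cancel] using this
    rw [mul_assoc, hder, hpow, map_nsmul, nsmul_eq_mul]
    rw [Nat.factorial_succ]
    push_cast
    have h1 : ((n : ℝ) + 1) ≠ 0 := by positivity
    field_simp
  rw [hL]
  -- RHS
  rw [PowerSeries.coeff_mul]
  have hR : ∑ p ∈ Finset.HasAntidiagonal.antidiagonal m, PowerSeries.coeff p.1 Gps *
      PowerSeries.coeff p.2 (d⁄dX ℝ Lps) =
      ∑ p ∈ Finset.HasAntidiagonal.antidiagonal m, ∑ n ∈ Finset.range (m + 1),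
        ((n.factorial : ℝ))⁻¹ * (PowerSeries.coeff p.1 (Lps ^ n) *
          PowerSeries.coeff p.2 (d⁄dX ℝ Lps)) := by
    refine Finset.sum_congr rfl fun p hp => ?_
    have hpm : p.1 + p.2 = m := Finset.HasAntidiagonal.mem_antidiagonal.mp hp
    rw [Gps_coeff, Gcoeff, Finset.sum_mul]
    rw [Finset.sum_subset (Finset.range_subset_range.mpr (by omega : p.1 + 1 ≤ m + 1))
      (fun n _ hn => by
        have hlt : p.1 < n := by simpa using hn
        simp [coeff_Lps_pow_eq_zero hlt])]
    exact Finset.sum_congr rfl fun n _ => by ring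
  rw [hR, Finset.sum_comm]
  refine Finset.sum_congr rfl fun n _ => ?_
  rw [PowerSeries.coeff_mul, Finset.mul_sum]

theorem Gps_eq_one_add_X : Gps = 1 + PowerSeries.X := by
  have hG : (1 + PowerSeries.X) * d⁄dX ℝ Gps = Gps := by
    rw [dGps_eq, ← mul_assoc, mul_comm (1 + PowerSeries.X) Gps, mul_assoc,
      one_add_X_mul_dLps, mul_one]
  -- coefficient recurrence
  have hrec : ∀ m : ℕ, ((m : ℝ) + 1) * Gcoeff (m + 1) + (m : ℝ) * Gcoeff m = Gcoeff m := by
    intro m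
    have := congrArg (PowerSeries.coeff m) hG
    rw [add_mul, one_mul, map_add] at this
    cases m with
    | zero =>
      simp only [PowerSeries.coeff_zero_X_mul, add_zero] at this
      rw [PowerSeries.coeff_derivative, Gps_coeff, Gps_coeff] at this
      push_cast
      rw [mul_comm]
      simpa using this
    | succ m =>
      simp only [PowerSeries.coeff_succ_X_mul, PowerSeries.coeff_derivative, Gps_coeff] at this
      push_cast at this ⊢
      linarith [this]
  have hG0 : Gcoeff 0 = 1 := by
    rw [Gcoeff]
    simp [PowerSeries.coeff_one]
  have hG1 : Gcoeff 1 = 1 := by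
    have := hrec 0
    simpa [hG0] using this
  have hGm : ∀ m : ℕ, 2 ≤ m → Gcoeff m = 0 := by
    intro m hm
    induction m with
    | zero => omega
    | succ m ih =>
      rcases Nat.lt_or_ge m 2 with hm2 | hm2
      · -- m = 1, so m+1 = 2
        have hm1 : m = 1 := by omega
        subst hm1
        have := hrec 1
        rw [hG1] at this
        push_cast at this
        linarith
      · have h0 : Gcoeff m = 0 := ih (by omega)
        have := hrec m
        rw [h0] at this
        have hm1 : ((m : ℝ) + 1) ≠ 0 := by positivity
        have : ((m : ℝ) + 1) * Gcoeff (m + 1) = 0 := by linarith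
        exact (mul_eq_zero.mp this).resolve_left hm1
  have : ∀ m, Gcoeff m = PowerSeries.coeff m (1 + PowerSeries.X) := by
    intro m
    rw [map_add, PowerSeries.coeff_one, PowerSeries.coeff_X]
    match m with
    | 0 => simpa using hG0
    | 1 => simpa using hG1
    | (n + 2) =>
      rw [hGm (n + 2) (by omega)]
      simp
  ext m
  rw [Gps_coeff, this m]


/-! ### Structure of `E` and `expO` -/

noncomputable def expPs : PowerSeries ℝ := PowerSeries.mk fun n => ((n.factorial : ℝ))⁻¹

theorem E_eq_hsum (b : HahnSeries ℝ ℝ) (hb : 0 < b.orderTop) :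
    E b = (expFamily b hb).hsum := by rw [E, dif_pos hb]

theorem E_eq_phe (b : HahnSeries ℝ ℝ) (hb : 0 < b.orderTop) :
    E b = phe expPs b hb := by
  rw [E_eq_hsum b hb, phe]
  congr 1
  refine SummableFamily.ext fun n => ?_
  show ((n.factorial : ℝ))⁻¹ • b ^ n = _
  rw [powFamily_apply, expPs, PowerSeries.coeff_mk]

theorem E_coeff_nonpos (b : HahnSeries ℝ ℝ) (hb : 0 < b.orderTop) {g : ℝ} (hg : g ≤ 0) :
    (E b).coeff g = (1 : HahnSeries ℝ ℝ).coeff g := by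
  rw [E_eq_hsum b hb, SummableFamily.coeff_hsum]
  rw [finsum_eq_single _ 0 (fun n hn => ?_)]
  · show ((Nat.factorial 0 : ℝ))⁻¹ • ((b ^ 0 : HahnSeries ℝ ℝ)).coeff g = _
    simp
  · show ((n.factorial : ℝ))⁻¹ • ((b ^ n : HahnSeries ℝ ℝ)).coeff g = 0
    rw [orderTop_pos_iff.mp (orderTop_pos_pow hb hn) g hg, smul_zero]

theorem E_coeff_zero (b : HahnSeries ℝ ℝ) (hb : 0 < b.orderTop) : (E b).coeff 0 = 1 := by
  rw [E_coeff_nonpos b hb le_rfl, HahnSeries.coeff_one, if_pos rfl]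

theorem E_sub_one_pos (b : HahnSeries ℝ ℝ) (hb : 0 < b.orderTop) :
    0 < (E b - 1).orderTop := by
  refine orderTop_pos_iff.mpr fun g hg => ?_
  rw [HahnSeries.coeff_sub, E_coeff_nonpos b hb hg, sub_self]

theorem E_ne_zero (b : HahnSeries ℝ ℝ) (hb : 0 < b.orderTop) : E b ≠ 0 := by
  intro h
  have := E_coeff_zero b hb
  rw [h, HahnSeries.coeff_zero] at this
  exact one_ne_zero this.symm

theorem E_order (b : HahnSeries ℝ ℝ) (hb : 0 < b.orderTop) : (E b).order = 0 := by
  have h1 : E b = 1 + (E b - 1) := by ring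
  have horder : (E b).orderTop = 0 := by
    rw [h1, orderTop_add_eq_left (by rw [orderTop_one]; exact E_sub_one_pos b hb)]
    exact orderTop_one
  have := order_eq_orderTop_of_ne_zero (E_ne_zero b hb)
  rw [horder] at this
  exact_mod_cast this

theorem expO_coeff_zero (a : HahnSeries ℝ ℝ) (ha : 0 ≤ a.orderTop) :
    (expO a).coeff 0 = Real.exp (a.coeff 0) := by
  rw [expO, coeff_single_zero_mul]
  have hb : 0 < (a - HahnSeries.single (0 : ℝ) (a.coeff 0)).orderTop := by
    refine orderTop_pos_iff.mpr fun g hg => ?_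
    rw [HahnSeries.coeff_sub]
    rcases eq_or_lt_of_le hg with rfl | hlt
    · rw [HahnSeries.coeff_single_same, sub_self]
    · rw [orderTop_nonneg_iff.mp ha g hlt, HahnSeries.coeff_single_of_ne hlt.ne, sub_zero]
  rw [E_coeff_zero _ hb, mul_one]

theorem sub_const_pos (a : HahnSeries ℝ ℝ) (ha : 0 ≤ a.orderTop) :
    0 < (a - HahnSeries.single (0 : ℝ) (a.coeff 0)).orderTop := by
  refine orderTop_pos_iff.mpr fun g hg => ?_
  rw [HahnSeries.coeff_sub]
  rcases eq_or_lt_of_le hg with rfl | hlt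
  · rw [HahnSeries.coeff_single_same, sub_self]
  · rw [orderTop_nonneg_iff.mp ha g hlt, HahnSeries.coeff_single_of_ne hlt.ne, sub_zero]

theorem expO_ne_zero (a : HahnSeries ℝ ℝ) (ha : 0 ≤ a.orderTop) : expO a ≠ 0 :=
  mul_ne_zero (single_ne_zero (Real.exp_ne_zero _)) (E_ne_zero _ (sub_const_pos a ha))

theorem expO_order (a : HahnSeries ℝ ℝ) (ha : 0 ≤ a.orderTop) : (expO a).order = 0 := by
  rw [expO, order_mul (single_ne_zero (Real.exp_ne_zero _)) (E_ne_zero _ (sub_const_pos a ha)),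
    order_single (Real.exp_ne_zero _), E_order _ (sub_const_pos a ha), add_zero]

theorem memUplus_expO (a : HahnSeries ℝ ℝ) (ha : 0 ≤ a.orderTop) : memUplus (expO a) := by
  refine ⟨expO_ne_zero a ha, expO_order a ha, ?_⟩
  rw [leadingCoeff_eq, expO_order a ha, expO_coeff_zero a ha]
  exact Real.exp_pos _

/-! ### Injectivity -/

theorem orderTop_nonneg_pow {x : HahnSeries ℝ ℝ} (hx : 0 ≤ x.orderTop) (n : ℕ) :
    0 ≤ (x ^ n).orderTop := by
  induction n with
  | zero => simp [orderTop_one]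
  | succ n ih => rw [pow_succ]; exact orderTop_nonneg_mul ih hx

theorem E_inj {b c : HahnSeries ℝ ℝ} (hb : 0 < b.orderTop) (hc : 0 < c.orderTop)
    (h : E b = E c) : b = c := by
  by_contra hne
  have hdne : b - c ≠ 0 := sub_ne_zero.mpr hne
  have hdpos : 0 < (b - c).orderTop := by
    refine orderTop_pos_iff.mpr fun g hg => ?_
    rw [HahnSeries.coeff_sub, orderTop_pos_iff.mp hb g hg, orderTop_pos_iff.mp hc g hg, sub_self]
  set δ : ℝ := (b - c).order with hδ
  have hδtop : (b - c).orderTop = (δ : WithTop ℝ) := (order_eq_orderTop_of_ne_zero hdne).symm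
  have hδpos : 0 < δ := (zero_lt_orderTop_iff hdne).mp hdpos
  have hcoeff : (b - c).coeff δ ≠ 0 := coeff_orderTop_ne hδtop
  -- coefficient of the difference of the two exponentials at δ
  have hdiff : (E b - E c).coeff δ = 0 := by rw [h, sub_self, HahnSeries.coeff_zero]
  have hfam : E b - E c = (expFamily b hb - expFamily c hc).hsum := by
    rw [SummableFamily.hsum_sub, E_eq_hsum b hb, E_eq_hsum c hc]
  rw [hfam, SummableFamily.coeff_hsum] at hdiff
  have hsingle : ∑ᶠ n : ℕ, ((expFamily b hb - expFamily c hc) n).coeff δ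
      = (b - c).coeff δ := by
    rw [finsum_eq_single _ 1 (fun n hn => ?_)]
    · show (((Nat.factorial 1 : ℝ))⁻¹ • b ^ 1 - ((Nat.factorial 1 : ℝ))⁻¹ • c ^ 1).coeff δ = _
      simp [HahnSeries.coeff_sub]
    · show (((n.factorial : ℝ))⁻¹ • b ^ n - ((n.factorial : ℝ))⁻¹ • c ^ n).coeff δ = 0
      rcases Nat.eq_zero_or_pos n with rfl | hn1
      · simp
      · have hn2 : 2 ≤ n := by omega
        have hfac : b ^ n - c ^ n = (∑ i ∈ Finset.range n, b ^ i * c ^ (n - 1 - i)) * (b - c) :=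
          (geom_sum₂_mul b c n).symm
        have hspos : 0 < (∑ i ∈ Finset.range n, b ^ i * c ^ (n - 1 - i)).orderTop := by
          refine orderTop_pos_sum fun i hi => ?_
          rcases Nat.eq_zero_or_pos i with rfl | hi1
          · rw [pow_zero, one_mul]
            exact orderTop_pos_pow hc (by omega)
          · exact orderTop_pos_mul (orderTop_pos_pow hb hi1.ne') (orderTop_nonneg_pow hc.le _)
        have hcoeffzero : (b ^ n - c ^ n).coeff δ = 0 := by
          rw [hfac]
          refine coeff_eq_zero_of_lt_orderTop (lt_of_lt_of_le ?_
            orderTop_add_le_mul)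
          rw [hδtop]
          calc (δ : WithTop ℝ) = 0 + (δ : WithTop ℝ) := (zero_add _).symm
            _ < (∑ i ∈ Finset.range n, b ^ i * c ^ (n - 1 - i)).orderTop + (δ : WithTop ℝ) :=
              WithTop.add_lt_add_right (WithTop.coe_ne_top) hspos
        have : (b ^ n).coeff δ = (c ^ n).coeff δ := by
          have := hcoeffzero
          rw [HahnSeries.coeff_sub, sub_eq_zero] at this
          exact this
        rw [HahnSeries.coeff_sub, HahnSeries.coeff_smul, HahnSeries.coeff_smul, this, sub_self]
  rw [hsingle] at hdiff
  exact hcoeff hdiff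

theorem expO_injOn {a₁ a₂ : HahnSeries ℝ ℝ} (h₁ : 0 ≤ a₁.orderTop) (h₂ : 0 ≤ a₂.orderTop)
    (h : expO a₁ = expO a₂) : a₁ = a₂ := by
  have hc0 : Real.exp (a₁.coeff 0) = Real.exp (a₂.coeff 0) := by
    rw [← expO_coeff_zero a₁ h₁, ← expO_coeff_zero a₂ h₂, h]
  have h00 : a₁.coeff 0 = a₂.coeff 0 := Real.exp_injective hc0
  rw [expO, expO, h00] at h
  have hE : E (a₁ - HahnSeries.single (0:ℝ) (a₂.coeff 0)) =
      E (a₂ - HahnSeries.single (0:ℝ) (a₂.coeff 0)) :=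
    mul_left_cancel₀ (single_ne_zero (Real.exp_ne_zero _)) h
  have := E_inj (h00 ▸ sub_const_pos a₁ h₁) (sub_const_pos a₂ h₂) hE
  exact sub_left_injective this

/-! ### Surjectivity -/

theorem phe_Lps_pos (ε : HahnSeries ℝ ℝ) (hε : 0 < ε.orderTop) :
    0 < (phe Lps ε hε).orderTop := by
  refine orderTop_pos_hsum _ fun n => ?_
  rw [powFamily_apply]
  rcases Nat.eq_zero_or_pos n with rfl | hn
  · have : PowerSeries.coeff 0 Lps = 0 := by rw [Lps, PowerSeries.coeff_mk]; simp
    have hz0 : (PowerSeries.coeff 0 Lps) • ε ^ 0 = 0 := by rw [this]; exact zero_smul ℝ (ε ^ 0)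
    rw [hz0, orderTop_zero]
    exact WithTop.top_pos
  · exact orderTop_pos_smul _ (orderTop_pos_pow hε hn.ne')

theorem phe_exp_phe (ε : HahnSeries ℝ ℝ) (hε : 0 < ε.orderTop)
    (hu : 0 < (phe Lps ε hε).orderTop) :
    phe expPs (phe Lps ε hε) hu = phe Gps ε hε := by
  classical
  set u := phe Lps ε hε with hudef
  ext γ
  set Mfin : Finset ℕ := (pow_cosupp_finite ε hε γ).toFinset with hM
  set N : ℕ := Mfin.sup id with hN
  have hMsub : {m : ℕ | (ε ^ m).coeff γ ≠ 0} ⊆ ↑Mfin := fun m hm =>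
    (Set.Finite.mem_toFinset _).mpr hm
  have hmemM : ∀ {m : ℕ}, m ∈ Mfin → m ≤ N := fun hm => Finset.le_sup (f := id) hm
  have hupow : ∀ n : ℕ, (u ^ n).coeff γ =
      ∑ m ∈ Mfin, PowerSeries.coeff m (Lps ^ n) * (ε ^ m).coeff γ := by
    intro n
    rw [hudef, ← phe_pow Lps ε hε n]
    exact phe_coeff_eq_sum _ ε hε γ hMsub
  rw [phe_coeff expPs u hu γ]
  have hsupp : (Function.support fun n : ℕ =>
      PowerSeries.coeff n expPs * (u ^ n).coeff γ) ⊆ ↑(Finset.range (N + 1)) := by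
    intro n hn
    rw [Function.mem_support, hupow n] at hn
    by_contra hnot
    have hNn : N < n := by simpa using hnot
    have hz : ∑ m ∈ Mfin, PowerSeries.coeff m (Lps ^ n) * (ε ^ m).coeff γ = 0 :=
      Finset.sum_eq_zero fun m hm => by
        rw [coeff_Lps_pow_eq_zero (lt_of_le_of_lt (hmemM hm) hNn), zero_mul]
    exact hn (by rw [hz, mul_zero])
  rw [finsum_eq_sum_of_support_subset _ hsupp]
  rw [phe_coeff_eq_sum Gps ε hε γ hMsub]
  -- swap the two finite sums
  simp_rw [hupow, Finset.mul_sum]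
  rw [Finset.sum_comm]
  refine Finset.sum_congr rfl fun m hm => ?_
  have hassoc : ∀ n : ℕ, PowerSeries.coeff n expPs *
      (PowerSeries.coeff m (Lps ^ n) * (ε ^ m).coeff γ) =
      (PowerSeries.coeff n expPs * PowerSeries.coeff m (Lps ^ n)) * (ε ^ m).coeff γ :=
    fun n => (mul_assoc _ _ _).symm
  rw [Finset.sum_congr rfl fun n _ => hassoc n, ← Finset.sum_mul]
  congr 1
  rw [Gps_coeff, Gcoeff]
  rw [← Finset.sum_subset (Finset.range_subset_range.mpr
      (by have := hmemM hm; omega : m + 1 ≤ N + 1))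
      (fun n _ hn => by
        have hlt : m < n := by simpa using hn
        rw [coeff_Lps_pow_eq_zero hlt, mul_zero])]
  exact Finset.sum_congr rfl fun n _ => by rw [expPs, PowerSeries.coeff_mk]

theorem phe_one_add_X (ε : HahnSeries ℝ ℝ) (hε : 0 < ε.orderTop) :
    phe (1 + PowerSeries.X) ε hε = 1 + ε := by
  rw [phe_add, phe_one, phe_X]

theorem expO_surj (y : HahnSeries ℝ ℝ) (hy : memUplus y) :
    ∃ a : HahnSeries ℝ ℝ, 0 ≤ a.orderTop ∧ expO a = y := by
  obtain ⟨hy0, hyo, hyl⟩ := hy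
  set y₀ : ℝ := y.coeff 0 with hy₀
  have hy₀pos : 0 < y₀ := by
    have : y.leadingCoeff = y.coeff 0 := by rw [leadingCoeff_eq, hyo]
    rw [hy₀, ← this]
    exact hyl
  set z : HahnSeries ℝ ℝ := HahnSeries.single (0:ℝ) y₀⁻¹ * y with hz
  set ε : HahnSeries ℝ ℝ := z - 1 with hεdef
  have hzc : ∀ g : ℝ, z.coeff g = y₀⁻¹ * y.coeff g := fun g => coeff_single_zero_mul
  have hε : 0 < ε.orderTop := by
    refine orderTop_pos_iff.mpr fun g hg => ?_
    rw [hεdef, HahnSeries.coeff_sub, hzc g]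
    rcases eq_or_lt_of_le hg with rfl | hlt
    · rw [← hy₀, inv_mul_cancel₀ hy₀pos.ne', HahnSeries.coeff_one, if_pos rfl, sub_self]
    · have hyg : y.coeff g = 0 := coeff_eq_zero_of_lt_order (by rw [hyo]; exact hlt)
      rw [hyg, mul_zero, HahnSeries.coeff_one, if_neg hlt.ne, sub_zero]
  set u : HahnSeries ℝ ℝ := phe Lps ε hε with hu
  have hupos : 0 < u.orderTop := phe_Lps_pos ε hε
  have hEu : E u = 1 + ε := by
    rw [E_eq_phe u hupos]
    calc phe expPs u hupos = phe Gps ε hε := phe_exp_phe ε hε hupos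
      _ = 1 + ε := by rw [Gps_eq_one_add_X, phe_one_add_X]
  refine ⟨HahnSeries.single (0:ℝ) (Real.log y₀) + u, ?_, ?_⟩
  · refine orderTop_nonneg_iff.mpr fun g hg => ?_
    rw [HahnSeries.coeff_add, HahnSeries.coeff_single_of_ne hg.ne,
      orderTop_pos_iff.mp hupos g hg.le, add_zero]
  · have hu0 : u.coeff 0 = 0 := orderTop_pos_iff.mp hupos 0 le_rfl
    have hc0 : (HahnSeries.single (0:ℝ) (Real.log y₀) + u).coeff 0 = Real.log y₀ := by
      rw [HahnSeries.coeff_add, HahnSeries.coeff_single_same, hu0, add_zero]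
    rw [expO, hc0, add_sub_cancel_left, hEu]
    have h1ε : (1 : HahnSeries ℝ ℝ) + ε = z := by rw [hεdef]; ring
    rw [h1ε, hz, ← mul_assoc, single_mul_single, add_zero, Real.exp_log hy₀pos,
      mul_inv_cancel₀ hy₀pos.ne', single_zero_one, one_mul]

/-! ### logO and hpow -/

theorem logO_mem (y : HahnSeries ℝ ℝ) (hy : memUplus y) :
    0 ≤ (logO y).orderTop ∧ expO (logO y) = y := by
  obtain ⟨a, ha, hae⟩ := expO_surj y hy
  have hex : ∃ a ∈ {a : HahnSeries ℝ ℝ | 0 ≤ a.orderTop}, expO a = y := ⟨a, ha, hae⟩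
  exact ⟨Function.invFunOn_mem hex, Function.invFunOn_eq hex⟩

theorem logO_expO (a : HahnSeries ℝ ℝ) (ha : 0 ≤ a.orderTop) : logO (expO a) = a := by
  obtain ⟨hmem, heq⟩ := logO_mem _ (memUplus_expO a ha)
  exact expO_injOn hmem ha heq

theorem hpow_mem (b c : HahnSeries ℝ ℝ) (hb : memUplus b) (hc : 0 ≤ c.orderTop) :
    memUplus (hpow b c) :=
  memUplus_expO _ (orderTop_nonneg_mul hc (logO_mem b hb).1)

theorem hpow_hpow (b c c' : HahnSeries ℝ ℝ) (hb : memUplus b) (hc : 0 ≤ c.orderTop)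
    (hc' : 0 ≤ c'.orderTop) : hpow (hpow b c) c' = hpow b (c' * c) := by
  have hcl : 0 ≤ (c * logO b).orderTop := orderTop_nonneg_mul hc (logO_mem b hb).1
  rw [hpow, hpow, hpow, logO_expO _ hcl, mul_assoc]

/-! ### diagPi, vv, tp -/

theorem single_inv (g : ℝ) (r : ℝ) (hr : r ≠ 0) :
    (HahnSeries.single g r)⁻¹ = HahnSeries.single (-g) r⁻¹ := by
  refine inv_eq_of_mul_eq_one_right ?_
  rw [single_mul_single, add_neg_cancel, mul_inv_cancel₀ hr, single_zero_one]

theorem singleO (γ : ℝ) : 0 ≤ (HahnSeries.single (0:ℝ) γ).orderTop := by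
  have := orderTop_single_le (a := (0:ℝ)) (r := γ)
  simpa using this

section

variable {a : HahnSeries ℝ ℝ}

theorem vv_eq (hla : 0 < a.leadingCoeff) : vv a = Real.exp (-a.order) := by
  rw [vv, Real.sign_of_pos hla, one_mul]

theorem vv_pos (hla : 0 < a.leadingCoeff) : 0 < vv a := by
  rw [vv_eq hla]; exact Real.exp_pos _

theorem diagPi_vv (hla : 0 < a.leadingCoeff) :
    diagPi (vv a) = HahnSeries.single a.order (vv a) := by
  rw [diagPi, abs_of_pos (vv_pos hla), vv_eq hla, Real.log_exp, neg_neg]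

theorem base_memUplus (ha : a ≠ 0) (hla : 0 < a.leadingCoeff) :
    memUplus (a / diagPi (vv a)) := by
  have hv := vv_pos hla
  rw [div_eq_mul_inv, diagPi_vv hla, single_inv _ _ hv.ne']
  have hsne : HahnSeries.single (-a.order) (vv a)⁻¹ ≠ (0 : HahnSeries ℝ ℝ) :=
    single_ne_zero (inv_ne_zero hv.ne')
  have hord : (a * HahnSeries.single (-a.order) (vv a)⁻¹).order = 0 := by
    rw [order_mul ha hsne, order_single (inv_ne_zero hv.ne'), add_neg_cancel]
  refine ⟨mul_ne_zero ha hsne, hord, ?_⟩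
  rw [leadingCoeff_eq, hord]
  have hc := coeff_mul_order_add_order a (HahnSeries.single (-a.order) (vv a)⁻¹)
  rw [order_single (inv_ne_zero hv.ne'), add_neg_cancel] at hc
  rw [hc, leadingCoeff_of_single]
  exact mul_pos hla (inv_pos.mpr hv)

theorem tp_struct (ha : a ≠ 0) (hla : 0 < a.leadingCoeff) (γ : ℝ) :
    tp a γ ≠ 0 ∧ 0 < (tp a γ).leadingCoeff ∧ vv (tp a γ) = (vv a) ^ γ ∧
      tp a γ / diagPi ((vv a) ^ γ) =
        hpow (a / diagPi (vv a)) (HahnSeries.single (0:ℝ) γ) := by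
  have hv := vv_pos hla
  have hr : 0 < (vv a) ^ γ := Real.rpow_pos_of_pos hv γ
  obtain ⟨hw0, hwo, hwl⟩ :=
    hpow_mem (a / diagPi (vv a)) (HahnSeries.single (0:ℝ) γ) (base_memUplus ha hla) (singleO γ)
  have hπne : diagPi ((vv a) ^ γ) ≠ 0 := single_ne_zero hr.ne'
  have htp0 : tp a γ ≠ 0 := mul_ne_zero hπne hw0
  have hord : (tp a γ).order = -Real.log ((vv a) ^ γ) := by
    rw [tp, order_mul hπne hw0, hwo, add_zero, diagPi, order_single hr.ne',
      abs_of_pos hr]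
  have hlc : (tp a γ).leadingCoeff =
      ((vv a) ^ γ) * (hpow (a / diagPi (vv a)) (HahnSeries.single (0:ℝ) γ)).leadingCoeff := by
    rw [tp, leadingCoeff_eq, order_mul hπne hw0, coeff_mul_order_add_order, diagPi,
      leadingCoeff_of_single]
  have hlcpos : 0 < (tp a γ).leadingCoeff := by rw [hlc]; exact mul_pos hr hwl
  have hvv : vv (tp a γ) = (vv a) ^ γ := by
    rw [vv, Real.sign_of_pos hlcpos, one_mul, hord, neg_neg, Real.exp_log hr]
  refine ⟨htp0, hlcpos, hvv, ?_⟩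
  rw [tp, mul_div_cancel_left₀ _ hπne]

end

end TP13

theorem stmt_13 (a : HahnSeries ℝ ℝ) (ha : a ≠ 0) (hla : 0 < a.leadingCoeff)
    (γ γ' : ℝ) :
    (tp a γ ≠ 0 ∧ 0 < (tp a γ).leadingCoeff) ∧ tp (tp a γ) γ' = tp a (γ * γ') := by
  have hstruct := TP13.tp_struct ha hla γ
  obtain ⟨h0, hlc, hvv, hquot⟩ := hstruct
  refine ⟨⟨h0, hlc⟩, ?_⟩
  have hb := TP13.base_memUplus ha hla
  rw [tp, hvv, hquot]
  rw [TP13.hpow_hpow _ _ _ hb (TP13.singleO γ) (TP13.singleO γ')]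
  rw [HahnSeries.single_mul_single, add_zero, mul_comm γ' γ]
  rw [← Real.rpow_mul (TP13.vv_pos hla).le γ γ']
  rw [tp]
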